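/- Let r > 0, p ≥ 1, 0 < ε < r, let B = p(r−ε)^{p−1}/(2ε) + 3((r−ε)^p − r^p)/(4ε²), and let μ > 0 satisfy μ|B| < 1. Let S_p^μ(ξ) denote the unique minimizer over ℝ of t ↦ (t−ξ)² + μ W_r^{p,ε}(t). Then S_p^μ is Lipschitz continuous with Lipschitz constant at most 1/(1 − μ|B|): |S_p^μ(ξ₁) − S_p^μ(ξ₂)| ≤ |ξ₁ − ξ₂|/(1 − μ|B|) for all ξ₁, ξ₂ ∈ ℝ. -/

import Mathlib

open Set

/-- The smoothed truncated power potential `W_r^{p,ε}`. -/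
noncomputable def Wpot (r p ε t : ℝ) : ℝ :=
  if |t| ≤ r - ε then |t| ^ p
  else if |t| ≤ r + ε then
    (p * (r - ε) ^ (p - 1) / (12 * ε ^ 2) +
        (p * (r - ε) ^ (p - 1) / (2 * ε) +
          3 * ((r - ε) ^ p - r ^ p) / (4 * ε ^ 2)) / (3 * ε)) *
      (|t| - (r + ε)) ^ 3 +
    (p * (r - ε) ^ (p - 1) / (2 * ε) + 3 * ((r - ε) ^ p - r ^ p) / (4 * ε ^ 2)) *
      (|t| - (r + ε)) ^ 2 + r ^ p
  else r ^ p

namespace Stmt16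

noncomputable def Bc (r p ε : ℝ) : ℝ :=
  p * (r - ε) ^ (p - 1) / (2 * ε) + 3 * ((r - ε) ^ p - r ^ p) / (4 * ε ^ 2)

noncomputable def Ac (r p ε : ℝ) : ℝ :=
  p * (r - ε) ^ (p - 1) / (12 * ε ^ 2) + Bc r p ε / (3 * ε)

noncomputable def cub (r p ε u : ℝ) : ℝ :=
  Ac r p ε * (u - (r + ε)) ^ 3 + Bc r p ε * (u - (r + ε)) ^ 2 + r ^ p

noncomputable def psi (r p ε u : ℝ) : ℝ :=
  |Bc r p ε| * u ^ 2 +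
    (if u ≤ r - ε then u ^ p else if u ≤ r + ε then cub r p ε u else r ^ p)

noncomputable def Df (r p ε u : ℝ) : ℝ :=
  2 * |Bc r p ε| * u +
    (if u ≤ r - ε then p * u ^ (p - 1)
     else if u ≤ r + ε then
       3 * Ac r p ε * (u - (r + ε)) ^ 2 + 2 * Bc r p ε * (u - (r + ε))
     else 0)

variable {r p ε : ℝ}

lemma jv1 (hε0 : 0 < ε) : cub r p ε (r - ε) = (r - ε) ^ p := by
  have hε : ε ≠ 0 := ne_of_gt hε0
  unfold cub Ac Bc
  field_simp
  ring

lemma jd1 (hε0 : 0 < ε) :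
    3 * Ac r p ε * ((r - ε) - (r + ε)) ^ 2 + 2 * Bc r p ε * ((r - ε) - (r + ε))
      = p * (r - ε) ^ (p - 1) := by
  have hε : ε ≠ 0 := ne_of_gt hε0
  unfold Ac Bc
  field_simp
  ring

lemma jv2 : cub r p ε (r + ε) = r ^ p := by simp [cub]

lemma rpow_gap (hp : 1 ≤ p) {a b : ℝ} (ha : 0 < a) (hab : a < b) :
    (b - a) * (p * a ^ (p - 1)) ≤ b ^ p - a ^ p := by
  obtain ⟨c, hc, hceq⟩ := exists_hasDerivAt_eq_slope (fun x : ℝ => x ^ p)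
    (fun x => p * x ^ (p - 1)) hab
    (fun x hx => ((Real.hasDerivAt_rpow_const
      (Or.inl (ne_of_gt (lt_of_lt_of_le ha hx.1)))).continuousAt).continuousWithinAt)
    (fun x hx => Real.hasDerivAt_rpow_const (Or.inl (ne_of_gt (ha.trans hx.1))))
  have h1 : p * a ^ (p - 1) ≤ p * c ^ (p - 1) := by
    have := Real.rpow_le_rpow ha.le hc.1.le (by linarith : (0:ℝ) ≤ p - 1)
    nlinarith [this]
  have hba : (0:ℝ) < b - a := by linarith
  have h2 : (b - a) * (p * c ^ (p - 1)) = b ^ p - a ^ p := by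
    rw [hceq]; field_simp
  nlinarith [mul_le_mul_of_nonneg_left h1 hba.le]

lemma hA_nonpos (hp : 1 ≤ p) (hε0 : 0 < ε) (hεr : ε < r) : Ac r p ε ≤ 0 := by
  have h0 : 0 < r - ε := by linarith
  have key := rpow_gap hp h0 (by linarith : r - ε < r)
  have hAeq : Ac r p ε
      = (ε * (p * (r - ε) ^ (p - 1)) - (r ^ p - (r - ε) ^ p)) / (4 * ε ^ 3) := by
    unfold Ac Bc
    have hε : ε ≠ 0 := ne_of_gt hε0
    field_simp
    ring
  rw [hAeq]
  apply div_nonpos_of_nonpos_of_nonneg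
  · nlinarith [key]
  · positivity

lemma hq1 (hp : 1 ≤ p) (u : ℝ) :
    HasDerivAt (fun x : ℝ => |Bc r p ε| * x ^ 2 + x ^ p)
      (2 * |Bc r p ε| * u + p * u ^ (p - 1)) u := by
  have h1 : HasDerivAt (fun x : ℝ => |Bc r p ε| * x ^ 2) (2 * |Bc r p ε| * u) u := by
    have := (hasDerivAt_pow 2 u).const_mul |Bc r p ε|
    convert this using 1 <;> try rfl
    push_cast; ring
  exact h1.add (Real.hasDerivAt_rpow_const (Or.inr hp))

lemma hq2 (u : ℝ) :
    HasDerivAt (fun x : ℝ => |Bc r p ε| * x ^ 2 + cub r p ε x)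
      (2 * |Bc r p ε| * u +
        (3 * Ac r p ε * (u - (r + ε)) ^ 2 + 2 * Bc r p ε * (u - (r + ε)))) u := by
  have h1 : HasDerivAt (fun x : ℝ => |Bc r p ε| * x ^ 2) (2 * |Bc r p ε| * u) u := by
    have := (hasDerivAt_pow 2 u).const_mul |Bc r p ε|
    convert this using 1 <;> try rfl
    push_cast; ring
  have hsb : HasDerivAt (fun x : ℝ => x - (r + ε)) 1 u := (hasDerivAt_id u).sub_const _
  have h3 : HasDerivAt (fun x : ℝ => (x - (r + ε)) ^ 3) (3 * (u - (r + ε)) ^ 2) u := by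
    have := hsb.pow 3
    convert this using 1 <;> try rfl
    push_cast; ring
  have h2 : HasDerivAt (fun x : ℝ => (x - (r + ε)) ^ 2) (2 * (u - (r + ε))) u := by
    have := hsb.pow 2
    convert this using 1 <;> try rfl
    push_cast; ring
  have h5 := ((h3.const_mul (Ac r p ε)).add (h2.const_mul (Bc r p ε))).add_const (r ^ p)
  have h4 : HasDerivAt (fun x : ℝ => cub r p ε x)
      (3 * Ac r p ε * (u - (r + ε)) ^ 2 + 2 * Bc r p ε * (u - (r + ε))) u := by
    unfold cub
    convert h5 using 1 <;> try rfl
    ring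
  exact h1.add h4

lemma hq3 (u : ℝ) :
    HasDerivAt (fun x : ℝ => |Bc r p ε| * x ^ 2 + r ^ p) (2 * |Bc r p ε| * u) u := by
  have := ((hasDerivAt_pow 2 u).const_mul |Bc r p ε|).add_const (r ^ p)
  convert this using 1 <;> try rfl
  push_cast; ring

lemma hder (hp : 1 ≤ p) (hε0 : 0 < ε) (hεr : ε < r) (u : ℝ) :
    HasDerivAt (psi r p ε) (Df r p ε u) u := by
  have hab : r - ε < r + ε := by linarith
  have hpsi1 : ∀ x ∈ Iic (r - ε), psi r p ε x = |Bc r p ε| * x ^ 2 + x ^ p := by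
    intro x hx; simp only [psi]; rw [if_pos (mem_Iic.1 hx)]
  have hpsi2 : ∀ x ∈ Icc (r - ε) (r + ε),
      psi r p ε x = |Bc r p ε| * x ^ 2 + cub r p ε x := by
    intro x hx
    rcases eq_or_lt_of_le hx.1 with h | h
    · simp only [psi]; rw [if_pos (le_of_eq h.symm), ← h, jv1 hε0]
    · simp only [psi]; rw [if_neg (not_le.2 h), if_pos hx.2]
  have hpsi3 : ∀ x ∈ Ici (r + ε), psi r p ε x = |Bc r p ε| * x ^ 2 + r ^ p := by
    intro x hx
    have hxa : ¬ x ≤ r - ε := not_le.2 (lt_of_lt_of_le hab hx)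
    rcases eq_or_lt_of_le (mem_Ici.1 hx) with h | h
    · simp only [psi]; rw [if_neg hxa, if_pos (le_of_eq h.symm), ← h, jv2]
    · simp only [psi]; rw [if_neg hxa, if_neg (not_le.2 h)]
  rcases lt_trichotomy u (r - ε) with hu | hu | hu
  · have hDf : Df r p ε u = 2 * |Bc r p ε| * u + p * u ^ (p - 1) := by
      simp only [Df]; rw [if_pos hu.le]
    rw [hDf]
    apply (hq1 hp u).congr_of_eventuallyEq
    filter_upwards [Iio_mem_nhds hu] with x hx
    exact hpsi1 x (mem_Iic.2 (le_of_lt (mem_Iio.1 hx)))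
  · have hDf : Df r p ε u = 2 * |Bc r p ε| * u + p * u ^ (p - 1) := by
      simp only [Df]; rw [if_pos hu.le]
    rw [hDf]
    have hmem : u ∈ Icc (r - ε) (r + ε) := ⟨le_of_eq hu.symm, by linarith [hu.le]⟩
    have hleft : HasDerivWithinAt (psi r p ε)
        (2 * |Bc r p ε| * u + p * u ^ (p - 1)) (Iic u) u := by
      refine ((hq1 hp u).hasDerivWithinAt).congr ?_ (hpsi1 u (le_of_eq hu))
      intro x hx; exact hpsi1 x (mem_Iic.2 ((mem_Iic.1 hx).trans (le_of_eq hu)))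
    have hright : HasDerivWithinAt (psi r p ε)
        (2 * |Bc r p ε| * u + p * u ^ (p - 1)) (Icc u (r + ε)) u := by
      have h := (hq2 (r := r) (p := p) (ε := ε) u).hasDerivWithinAt (s := Icc u (r + ε))
      have heq : 3 * Ac r p ε * (u - (r + ε)) ^ 2 + 2 * Bc r p ε * (u - (r + ε))
          = p * u ^ (p - 1) := by rw [hu]; exact jd1 hε0
      rw [heq] at h
      refine h.congr ?_ (hpsi2 u hmem)
      intro x hx
      exact hpsi2 x ⟨hu.symm.trans_le hx.1, hx.2⟩
    have hu2 : u < r + ε := by rw [hu]; exact hab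
    have hun := hleft.union hright
    rw [Iic_union_Icc_eq_Iic hu2.le] at hun
    exact hun.hasDerivAt (Iic_mem_nhds hu2)
  · rcases lt_trichotomy u (r + ε) with hu2 | hu2 | hu2
    · have hDf : Df r p ε u = 2 * |Bc r p ε| * u +
          (3 * Ac r p ε * (u - (r + ε)) ^ 2 + 2 * Bc r p ε * (u - (r + ε))) := by
        simp only [Df]; rw [if_neg (not_le.2 hu), if_pos hu2.le]
      rw [hDf]
      apply (hq2 u).congr_of_eventuallyEq
      filter_upwards [Ioo_mem_nhds hu hu2] with x hx
      exact hpsi2 x (Ioo_subset_Icc_self hx)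
    · have hDf : Df r p ε u = 2 * |Bc r p ε| * u := by
        simp only [Df]; rw [if_neg (not_le.2 hu), if_pos (le_of_eq hu2)]
        rw [hu2]; ring
      rw [hDf]
      have hmem : u ∈ Icc (r - ε) (r + ε) := ⟨by linarith [hu.le], le_of_eq hu2⟩
      have hleft : HasDerivWithinAt (psi r p ε) (2 * |Bc r p ε| * u)
          (Icc (r - ε) u) u := by
        have h := (hq2 (r := r) (p := p) (ε := ε) u).hasDerivWithinAt (s := Icc (r - ε) u)
        have heq : 2 * |Bc r p ε| * u +
            (3 * Ac r p ε * (u - (r + ε)) ^ 2 + 2 * Bc r p ε * (u - (r + ε)))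
            = 2 * |Bc r p ε| * u := by rw [hu2]; ring
        rw [heq] at h
        refine h.congr ?_ (hpsi2 u hmem)
        intro x hx
        exact hpsi2 x ⟨hx.1, hx.2.trans (le_of_eq hu2)⟩
      have hright : HasDerivWithinAt (psi r p ε) (2 * |Bc r p ε| * u) (Ici u) u := by
        refine ((hq3 u).hasDerivWithinAt).congr ?_ (hpsi3 u (mem_Ici.2 (le_of_eq hu2.symm)))
        intro x hx
        exact hpsi3 x (mem_Ici.2 ((le_of_eq hu2.symm).trans (mem_Ici.1 hx)))
      have hun := hleft.union hright
      rw [Icc_union_Ici_eq_Ici (by linarith [hu.le] : r - ε ≤ u)] at hun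
      exact hun.hasDerivAt (Ici_mem_nhds (by linarith [hu.le]))
    · have hDf : Df r p ε u = 2 * |Bc r p ε| * u := by
        simp only [Df]; rw [if_neg (not_le.2 hu), if_neg (not_le.2 hu2)]; ring
      rw [hDf]
      apply (hq3 u).congr_of_eventuallyEq
      filter_upwards [Ioi_mem_nhds hu2] with x hx
      exact hpsi3 x (mem_Ici.2 (le_of_lt hx))

lemma Dmono (hp : 1 ≤ p) (hε0 : 0 < ε) (hεr : ε < r) :
    MonotoneOn (Df r p ε) (Ici 0) := by
  have hA := hA_nonpos (r := r) hp hε0 hεr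
  have hBB : 0 ≤ |Bc r p ε| + Bc r p ε := by
    have := neg_abs_le (Bc r p ε); linarith
  have habs : 0 ≤ |Bc r p ε| := abs_nonneg _
  set A := Ac r p ε
  set B := Bc r p ε
  set d1 : ℝ → ℝ := fun u => 2 * |B| * u + p * u ^ (p - 1) with hd1
  set d2 : ℝ → ℝ := fun u =>
    2 * |B| * u + (3 * A * (u - (r + ε)) ^ 2 + 2 * B * (u - (r + ε))) with hd2
  set d3 : ℝ → ℝ := fun u => 2 * |B| * u with hd3
  have e1 : ∀ u, u ≤ r - ε → Df r p ε u = d1 u := by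
    intro u hu; simp only [Df]; rw [if_pos hu]
  have jd : d1 (r - ε) = d2 (r - ε) := by
    simp only [hd1, hd2]; rw [jd1 hε0]
  have e2 : ∀ u, r - ε ≤ u → u ≤ r + ε → Df r p ε u = d2 u := by
    intro u hu1 hu2
    rcases eq_or_lt_of_le hu1 with h | h
    · rw [e1 u (le_of_eq h.symm), ← h, jd]
    · simp only [Df]; rw [if_neg (not_le.2 h), if_pos hu2]
  have jd2 : d2 (r + ε) = d3 (r + ε) := by simp [hd2, hd3]
  have e3 : ∀ u, r + ε ≤ u → Df r p ε u = d3 u := by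
    intro u hu
    rcases eq_or_lt_of_le hu with h | h
    · rw [e2 u (by linarith) (le_of_eq h.symm), ← h, jd2]
    · simp only [Df]
      rw [if_neg (not_le.2 (by linarith : r - ε < u)), if_neg (not_le.2 h)]
      simp [hd3]; exact Or.inl rfl
  have m1 : ∀ x y : ℝ, 0 ≤ x → x ≤ y → d1 x ≤ d1 y := by
    intro x y hx hxy
    have h1 : x ^ (p - 1) ≤ y ^ (p - 1) :=
      Real.rpow_le_rpow hx hxy (by linarith)
    have hp0 : (0:ℝ) ≤ p := by linarith
    have h2 := mul_le_mul_of_nonneg_left h1 hp0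
    simp only [hd1]
    nlinarith [mul_le_mul_of_nonneg_left hxy (by positivity : (0:ℝ) ≤ 2 * |B|)]
  have m2 : ∀ x y : ℝ, x ≤ y → y ≤ r + ε → d2 x ≤ d2 y := by
    intro x y hxy hyb
    have h1 : 0 ≤ (y - x) * (|B| + B) := mul_nonneg (by linarith) hBB
    have h2 : 0 ≤ (-A) * ((y - x) * ((2 * (r + ε) - x - y))) := by
      apply mul_nonneg (by linarith)
      apply mul_nonneg (by linarith)
      linarith
    simp only [hd2]
    nlinarith [h1, h2]
  have m3 : ∀ x y : ℝ, x ≤ y → d3 x ≤ d3 y := by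
    intro x y hxy
    simp only [hd3]
    nlinarith [mul_le_mul_of_nonneg_left hxy (by positivity : (0:ℝ) ≤ 2 * |B|)]
  intro x hx y hy hxy
  have hx0 : (0:ℝ) ≤ x := hx
  rcases le_or_gt y (r - ε) with hy1 | hy1
  · rw [e1 x (hxy.trans hy1), e1 y hy1]; exact m1 x y hx0 hxy
  · rcases le_or_gt y (r + ε) with hy2 | hy2
    · rcases le_or_gt x (r - ε) with hx1 | hx1
      · rw [e1 x hx1, e2 y hy1.le hy2]
        calc d1 x ≤ d1 (r - ε) := m1 x _ hx0 hx1
          _ = d2 (r - ε) := jd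
          _ ≤ d2 y := m2 _ y hy1.le hy2
      · rw [e2 x hx1.le (by linarith), e2 y hy1.le hy2]
        exact m2 x y hxy hy2
    · rw [e3 y hy2.le]
      rcases le_or_gt x (r - ε) with hx1 | hx1
      · rw [e1 x hx1]
        calc d1 x ≤ d1 (r - ε) := m1 x _ hx0 hx1
          _ = d2 (r - ε) := jd
          _ ≤ d2 (r + ε) := m2 _ _ (by linarith) le_rfl
          _ = d3 (r + ε) := jd2
          _ ≤ d3 y := m3 _ y hy2.le
      · rcases le_or_gt x (r + ε) with hx2 | hx2
        · rw [e2 x hx1.le hx2]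
          calc d2 x ≤ d2 (r + ε) := m2 _ _ hx2 le_rfl
            _ = d3 (r + ε) := jd2
            _ ≤ d3 y := m3 _ y hy2.le
        · rw [e3 x hx2.le]; exact m3 x y hxy

lemma Dnonneg (hp : 1 ≤ p) (hε0 : 0 < ε) (hεr : ε < r) :
    ∀ u ∈ Ici (0:ℝ), 0 ≤ Df r p ε u := by
  intro u hu
  have h0 : Df r p ε 0 = p * (0:ℝ) ^ (p - 1) := by
    simp only [Df]; rw [if_pos (by linarith : (0:ℝ) ≤ r - ε)]; ring
  have h1 : 0 ≤ Df r p ε 0 := by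
    rw [h0]
    exact mul_nonneg (by linarith) (Real.rpow_nonneg le_rfl _)
  exact h1.trans (Dmono hp hε0 hεr self_mem_Ici hu hu)

lemma psi_convex (hp : 1 ≤ p) (hε0 : 0 < ε) (hεr : ε < r) :
    ConvexOn ℝ (Ici 0) (psi r p ε) := by
  have hdiff : DifferentiableOn ℝ (psi r p ε) (interior (Ici (0:ℝ))) :=
    fun x _ => (hder hp hε0 hεr x).differentiableAt.differentiableWithinAt
  have hcont : ContinuousOn (psi r p ε) (Ici 0) :=
    fun x _ => (hder hp hε0 hεr x).continuousAt.continuousWithinAt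
  have hmonoD : MonotoneOn (deriv (psi r p ε)) (interior (Ici (0:ℝ))) := by
    rw [interior_Ici]
    intro x hx y hy hxy
    rw [(hder hp hε0 hεr x).deriv, (hder hp hε0 hεr y).deriv]
    exact Dmono hp hε0 hεr (mem_Ici.2 (le_of_lt hx)) (mem_Ici.2 (le_of_lt hy)) hxy
  exact hmonoD.convexOn_of_deriv (convex_Ici 0) hcont hdiff

lemma psi_mono (hp : 1 ≤ p) (hε0 : 0 < ε) (hεr : ε < r) :
    MonotoneOn (psi r p ε) (Ici 0) := by
  have hdiff : DifferentiableOn ℝ (psi r p ε) (interior (Ici (0:ℝ))) :=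
    fun x _ => (hder hp hε0 hεr x).differentiableAt.differentiableWithinAt
  have hcont : ContinuousOn (psi r p ε) (Ici 0) :=
    fun x _ => (hder hp hε0 hεr x).continuousAt.continuousWithinAt
  refine monotoneOn_of_deriv_nonneg (convex_Ici 0) hcont hdiff ?_
  intro x hx
  rw [interior_Ici] at hx
  rw [(hder hp hε0 hεr x).deriv]
  exact Dnonneg hp hε0 hεr x (mem_Ici.2 (le_of_lt hx))

lemma psi_comp_abs_convex (hp : 1 ≤ p) (hε0 : 0 < ε) (hεr : ε < r) :
    ConvexOn ℝ univ (fun t : ℝ => psi r p ε |t|) := by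
  have himg : (fun t : ℝ => |t|) '' univ = Ici 0 := by
    ext x
    simp only [image_univ, mem_range, mem_Ici]
    constructor
    · rintro ⟨y, rfl⟩; exact abs_nonneg y
    · intro hx; exact ⟨x, abs_of_nonneg hx⟩
  have hconv := psi_convex (r := r) hp hε0 hεr
  have hmono := psi_mono (r := r) hp hε0 hεr
  rw [← himg] at hconv hmono
  have habs : ConvexOn ℝ univ (fun t : ℝ => |t|) := by
    exact convexOn_univ_norm (E := ℝ)
  exact hconv.comp habs hmono

lemma psi_abs_eq (t : ℝ) :
    psi r p ε |t| = |Bc r p ε| * t ^ 2 + Wpot r p ε t := by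
  simp only [psi, Wpot, cub, Ac, Bc, sq_abs]

end Stmt16

open Stmt16

/-- The thresholding function `S_p^μ` (the minimizer of
`t ↦ (t−ξ)² + μ W_r^{p,ε}(t)`, for `μ|B| < 1`) is Lipschitz with constant
at most `1/(1 − μ|B|)`. -/
theorem statement16 (r p ε μ : ℝ) (hr : 0 < r) (hp : 1 ≤ p) (hε0 : 0 < ε) (hεr : ε < r)
    (hμ : 0 < μ)
    (hμB : μ * |p * (r - ε) ^ (p - 1) / (2 * ε) +
        3 * ((r - ε) ^ p - r ^ p) / (4 * ε ^ 2)| < 1)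
    (S : ℝ → ℝ)
    (hS : ∀ ξ s : ℝ, (S ξ - ξ) ^ 2 + μ * Wpot r p ε (S ξ) ≤ (s - ξ) ^ 2 + μ * Wpot r p ε s) :
    ∀ ξ₁ ξ₂ : ℝ, |S ξ₁ - S ξ₂| ≤ |ξ₁ - ξ₂| /
      (1 - μ * |p * (r - ε) ^ (p - 1) / (2 * ε) +
        3 * ((r - ε) ^ p - r ^ p) / (4 * ε ^ 2)|) := by
  have hμBc : μ * |Bc r p ε| < 1 := hμB
  have hc0 : 0 < 1 - μ * |Bc r p ε| := by linarith
  have hcomp := psi_comp_abs_convex (r := r) (p := p) (ε := ε) hp hε0 hεr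
  -- quadratic growth at the minimizer
  have growth : ∀ ξ s : ℝ,
      (1 - μ * |Bc r p ε|) * (s - S ξ) ^ 2 + ((S ξ - ξ) ^ 2 + μ * Wpot r p ε (S ξ))
        ≤ (s - ξ) ^ 2 + μ * Wpot r p ε s := by
    intro ξ s
    set c : ℝ := 1 - μ * |Bc r p ε| with hcdef
    set x : ℝ := S ξ with hxdef
    set G : ℝ → ℝ := fun t => μ * psi r p ε |t| + (-(2 * ξ) * t + ξ ^ 2) with hGdef
    have h1 : ConvexOn ℝ univ (fun t : ℝ => μ * psi r p ε |t|) := by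
      simpa [Pi.smul_apply, smul_eq_mul] using hcomp.smul hμ.le
    have haff : ConvexOn ℝ univ (fun t : ℝ => -(2 * ξ) * t + ξ ^ 2) := by
      refine ⟨convex_univ, ?_⟩
      intro u _ v _ a b ha hb hab
      simp only [smul_eq_mul]
      apply le_of_eq
      linear_combination (-(ξ ^ 2)) * hab
    have hG : ConvexOn ℝ univ G := h1.add haff
    have hf : ∀ t : ℝ, (t - ξ) ^ 2 + μ * Wpot r p ε t = c * t ^ 2 + G t := by
      intro t
      simp only [hGdef, hcdef]
      rw [psi_abs_eq t]
      ring
    have hmin : ∀ t : ℝ, c * x ^ 2 + G x ≤ c * t ^ 2 + G t := by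
      intro t
      have h := hS ξ t
      rwa [hf, hf] at h
    have key : ∀ l : ℝ, 0 < l → l ≤ 1 →
        c * ((1 - l) * (s - x) ^ 2) ≤ (c * s ^ 2 + G s) - (c * x ^ 2 + G x) := by
      intro l hl0 hl1
      have hmin' := hmin (x + l * (s - x))
      have hGc := hG.2 (mem_univ x) (mem_univ s)
        (by linarith : (0:ℝ) ≤ 1 - l) hl0.le (by ring : (1 - l) + l = 1)
      simp only [smul_eq_mul] at hGc
      rw [show (1 - l) * x + l * s = x + l * (s - x) by ring] at hGc
      have expand : c * (x + l * (s - x)) ^ 2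
          = (1 - l) * (c * x ^ 2) + l * (c * s ^ 2) - c * (l * ((1 - l) * (s - x) ^ 2)) := by
        ring
      have step : l * (c * ((1 - l) * (s - x) ^ 2))
          ≤ l * ((c * s ^ 2 + G s) - (c * x ^ 2 + G x)) := by
        nlinarith [hmin', hGc, expand]
      exact le_of_mul_le_mul_left step hl0
    have hfinal : c * (s - x) ^ 2 ≤ (c * s ^ 2 + G s) - (c * x ^ 2 + G x) := by
      have hq0 : 0 ≤ c * (s - x) ^ 2 := by positivity
      rcases eq_or_lt_of_le hq0 with hz | hz
      · have := hmin s
        linarith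
      · refine le_of_forall_sub_le ?_
        intro δ hδ
        set q : ℝ := c * (s - x) ^ 2 with hqdef
        have hqδ : (0:ℝ) < q + δ := by linarith
        set l : ℝ := δ / (q + δ) with hldef
        have hl0 : 0 < l := div_pos hδ hqδ
        have hl1 : l ≤ 1 := by
          rw [hldef, div_le_one hqδ]
          linarith
        have hk := key l hl0 hl1
        have heq : c * ((1 - l) * (s - x) ^ 2) = q - l * q := by
          rw [hqdef]; ring
        have hlq : l * q ≤ δ := by
          rw [hldef, div_mul_eq_mul_div, div_le_iff₀ hqδ]
          nlinarith
        linarith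
    have hgoal := hfinal
    rw [hf s, hf x]
    linarith
  intro ξ₁ ξ₂
  have g1 := growth ξ₁ (S ξ₂)
  have g2 := growth ξ₂ (S ξ₁)
  have hkey : (1 - μ * |Bc r p ε|) * (S ξ₁ - S ξ₂) ^ 2
      ≤ (S ξ₁ - S ξ₂) * (ξ₁ - ξ₂) := by nlinarith [g1, g2]
  show |S ξ₁ - S ξ₂| ≤ |ξ₁ - ξ₂| / (1 - μ * |Bc r p ε|)
  rw [le_div_iff₀ hc0]
  rcases eq_or_ne (S ξ₁) (S ξ₂) with h | h
  · rw [h, sub_self, abs_zero, zero_mul]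
    exact abs_nonneg _
  · have habs : 0 < |S ξ₁ - S ξ₂| := abs_pos.2 (sub_ne_zero.2 h)
    have h2 : (1 - μ * |Bc r p ε|) * |S ξ₁ - S ξ₂| ^ 2
        ≤ |S ξ₁ - S ξ₂| * |ξ₁ - ξ₂| := by
      rw [sq_abs]
      calc (1 - μ * |Bc r p ε|) * (S ξ₁ - S ξ₂) ^ 2
          ≤ (S ξ₁ - S ξ₂) * (ξ₁ - ξ₂) := hkey
        _ ≤ |(S ξ₁ - S ξ₂) * (ξ₁ - ξ₂)| := le_abs_self _
        _ = |S ξ₁ - S ξ₂| * |ξ₁ - ξ₂| := abs_mul _ _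
    nlinarith [h2, habs]
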